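/- In the setting of the canonical fixed point (A, fold, unfold) of a locally continuous functor F on an O-category K with strict morphisms, initial object, and O-colimits: if (C, c) is an F-algebra in which c : F C → C is an embedding, then (C, c^p) is an F-coalgebra, and the unique algebra morphism φ : (A, fold) → (C, c) and the unique coalgebra morphism ρ : (C, c^p) → (A, unfold) form an embedding-projection pair: ρ ∘ φ = id_A and φ ∘ ρ ⊑ id_C. -/

import Mathlib

open CategoryTheory OmegaCompletePartialOrder

universe v u

class OHom (K : Type u) [Category.{v} K] where
  homOrder : ∀ X Y : K, OmegaCompletePartialOrder (X ⟶ Y)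

attribute [instance] OHom.homOrder

/-- An O-category: a category enriched in dcpos with continuous composition. -/
class OCat (K : Type u) [Category.{v} K] extends OHom K where
  comp_mono : ∀ {X Y Z : K} {f f' : X ⟶ Y} {g g' : Y ⟶ Z},
    f ≤ f' → g ≤ g' → f ≫ g ≤ f' ≫ g'
  comp_cont_left : ∀ {X Y Z : K} (g : Y ⟶ Z) (c : Chain (X ⟶ Y))
    (hm : Monotone fun n => c n ≫ g),
    ωSup c ≫ g = ωSup ⟨fun n => c n ≫ g, hm⟩
  comp_cont_right : ∀ {X Y Z : K} (f : X ⟶ Y) (c : Chain (Y ⟶ Z))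
    (hm : Monotone fun n => f ≫ c n),
    f ≫ ωSup c = ωSup ⟨fun n => f ≫ c n, hm⟩

/-- Iterated application of an endofunctor to an object: `pob F X n = Fⁿ X`. -/
def pob {K : Type u} [Category.{v} K] (F : K ⥤ K) (X : K) : ℕ → K
  | 0 => X
  | n + 1 => F.obj (pob F X n)

/-- The links `Fⁿ k : Fⁿ X ⟶ Fⁿ⁺¹ X` of the ω-chain generated by a first link
`k : X ⟶ F X`. -/
def plink {K : Type u} [Category.{v} K] (F : K ⥤ K) {X : K} (k : X ⟶ F.obj X) :
    ∀ n, pob F X n ⟶ pob F X (n + 1)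
  | 0 => k
  | n + 1 => F.map (plink F k n)

lemma ωSup_comp_ωSup {K : Type u} [Category.{v} K] [OCat K] {X Y Z : K}
    (a : Chain (X ⟶ Y)) (b : Chain (Y ⟶ Z))
    (hm : Monotone fun n => a n ≫ b n) :
    ωSup a ≫ ωSup b = ωSup ⟨fun n => a n ≫ b n, hm⟩ := by
  have h1 : Monotone fun n => a n ≫ ωSup b :=
    fun n m h => OCat.comp_mono (a.monotone h) le_rfl
  rw [OCat.comp_cont_left (ωSup b) a h1]
  apply le_antisymm
  · apply ωSup_le
    intro n
    have h2 : Monotone fun m => a n ≫ b m :=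
      fun i j h => OCat.comp_mono le_rfl (b.monotone h)
    show a n ≫ ωSup b ≤ _
    rw [OCat.comp_cont_right (a n) b h2]
    apply ωSup_le
    intro m
    calc a n ≫ b m ≤ a (max n m) ≫ b (max n m) :=
          OCat.comp_mono (a.monotone (le_max_left n m)) (b.monotone (le_max_right n m))
      _ ≤ _ := le_ωSup ⟨fun k => a k ≫ b k, hm⟩ (max n m)
  · apply ωSup_le
    intro n
    calc a n ≫ b n ≤ a n ≫ ωSup b := OCat.comp_mono le_rfl (le_ωSup b n)
      _ ≤ _ := le_ωSup ⟨fun k => a k ≫ ωSup b, h1⟩ n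

/-- For an F-algebra (C, c) with c an embedding (projection cp),
(C, cp) is an F-coalgebra, and the unique algebra morphism φ : A ⟶ C out of the
canonical fixed point and the unique coalgebra morphism ρ : C ⟶ A into it form an
e-p-pair: ρ ∘ φ = id_A and φ ∘ ρ ⊑ id_C. -/
theorem algebra_coalgebra_ep_pair {K : Type u} [Category.{v} K] [OCat K]
    (bot : K) (ι : ∀ A : K, bot ⟶ A) (hinit : ∀ (A : K) (f : bot ⟶ A), f = ι A)
    (z : ∀ X Y : K, X ⟶ Y)
    (hz₁ : ∀ {X Y Z : K} (f : X ⟶ Y), f ≫ z Y Z = z X Z)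
    (hz₂ : ∀ {X Y Z : K} (g : Y ⟶ Z), z X Y ≫ g = z X Z)
    (hstrict : ∀ {X Y : K} (f : X ⟶ Y), z X Y ≤ f)
    (F : K ⥤ K)
    (hFmono : ∀ {X Y : K} {f g : X ⟶ Y}, f ≤ g → F.map f ≤ F.map g)
    (hFcont : ∀ {X Y : K} (c : Chain (X ⟶ Y))
      (hm : Monotone fun n => F.map (c n)),
      F.map (ωSup c) = ωSup ⟨fun n => F.map (c n), hm⟩)
    (A : K) (κ : ∀ n, pob F bot n ⟶ A) (κp : ∀ n, A ⟶ pob F bot n)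
    (hcocone : ∀ n, plink F (ι (F.obj bot)) n ≫ κ (n + 1) = κ n)
    (hκ₁ : ∀ n, κ n ≫ κp n = 𝟙 (pob F bot n)) (hκ₂ : ∀ n, κp n ≫ κ n ≤ 𝟙 A)
    (hκmono : Monotone fun n => κp n ≫ κ n)
    (hκsup : ωSup ⟨fun n => κp n ≫ κ n, hκmono⟩ = 𝟙 A)
    (C : K) (c : F.obj C ⟶ C) (cp : C ⟶ F.obj C)
    (hc₁ : c ≫ cp = 𝟙 (F.obj C)) (hc₂ : cp ≫ c ≤ 𝟙 C)
    (α : ∀ n, pob F bot n ⟶ C)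
    (hα₀ : α 0 = ι C) (hαs : ∀ n, α (n + 1) = F.map (α n) ≫ c)
    (β : ∀ n, C ⟶ pob F bot n)
    (hβ₀ : β 0 = z C bot) (hβs : ∀ n, β (n + 1) = cp ≫ F.map (β n)) :
    ∀ (hφ : Monotone fun n => κp n ≫ α n) (hρ : Monotone fun n => β n ≫ κ n),
      (ωSup ⟨fun n => κp n ≫ α n, hφ⟩ ≫ ωSup ⟨fun n => β n ≫ κ n, hρ⟩ = 𝟙 A) ∧
      (ωSup ⟨fun n => β n ≫ κ n, hρ⟩ ≫ ωSup ⟨fun n => κp n ≫ α n, hφ⟩ ≤ 𝟙 C) := by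
  intro hφ hρ
  have hαβ : ∀ n, α n ≫ β n = 𝟙 (pob F bot n) := by
    intro n
    induction n with
    | zero =>
      rw [hα₀, hβ₀]
      exact (hinit bot _).trans (hinit bot (𝟙 (pob F bot 0))).symm
    | succ n ih =>
      rw [hαs, hβs]
      show @CategoryStruct.comp K _ (F.obj (pob F bot n)) C (F.obj (pob F bot n)) (F.map (α n) ≫ c) (cp ≫ F.map (β n)) = 𝟙 (pob F bot (n + 1))
      rw [Category.assoc, ← Category.assoc c cp, hc₁, Category.id_comp,
        ← F.map_comp, ih, F.map_id]
      rfl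
  have hβα : ∀ n, β n ≫ α n ≤ 𝟙 C := by
    intro n
    induction n with
    | zero =>
      rw [hβ₀, hα₀]
      exact le_trans (le_of_eq (hz₂ (ι C))) (hstrict (𝟙 C))
    | succ n ih =>
      rw [hβs, hαs]
      show @CategoryStruct.comp K _ C (F.obj (pob F bot n)) C (cp ≫ F.map (β n)) (F.map (α n) ≫ c) ≤ 𝟙 C
      simp only [Category.assoc]
      calc cp ≫ F.map (β n) ≫ F.map (α n) ≫ c
          = cp ≫ F.map (β n ≫ α n) ≫ c := by rw [← Category.assoc (F.map (β n)), ← F.map_comp]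
        _ ≤ cp ≫ F.map (𝟙 C) ≫ c :=
            OCat.comp_mono le_rfl (OCat.comp_mono (hFmono ih) le_rfl)
        _ = cp ≫ c := by rw [F.map_id, Category.id_comp]
        _ ≤ 𝟙 C := hc₂
  have hmono1 : Monotone fun n => (κp n ≫ α n) ≫ (β n ≫ κ n) :=
    fun i j h => OCat.comp_mono (hφ h) (hρ h)
  have hmono2 : Monotone fun n => (β n ≫ κ n) ≫ (κp n ≫ α n) :=
    fun i j h => OCat.comp_mono (hρ h) (hφ h)
  constructor
  · rw [ωSup_comp_ωSup _ _ hmono1]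
    rw [← hκsup]
    congr 1
    refine Chain.ext ?_
    funext n
    show (κp n ≫ α n) ≫ (β n ≫ κ n) = κp n ≫ κ n
    rw [Category.assoc, ← Category.assoc (α n), hαβ, Category.id_comp]
  · rw [ωSup_comp_ωSup _ _ hmono2]
    apply ωSup_le
    intro n
    show (β n ≫ κ n) ≫ (κp n ≫ α n) ≤ 𝟙 C
    have : (β n ≫ κ n) ≫ (κp n ≫ α n) = β n ≫ α n := by
      rw [Category.assoc, ← Category.assoc (κ n), hκ₁, Category.id_comp]
    rw [this]
    exact hβα n
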